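/- Every graph of diameter two that is isomorphic to one of K_{1,2}, K_{2,2}, K_{2,3}, K_{1,2,2}, K'_{1,2,2}, the house graph K''_{1,2,2}, M_6, K'_6, M_8, K'_8 has strictly fewer lines than vertices. -/

import Mathlib

open scoped Classical

namespace ChenChvatal

variable {V : Type*}

/-- `G` has diameter exactly two: some pair of distinct vertices is non-adjacent,
and any two distinct non-adjacent vertices have a common neighbor. -/
def DiamTwo (G : SimpleGraph V) : Prop :=
  (∃ x y : V, x ≠ y ∧ ¬ G.Adj x y) ∧
    ∀ x y : V, x ≠ y → ¬ G.Adj x y → ∃ z, G.Adj x z ∧ G.Adj z y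

/-- The line of a diameter-two graph defined by two vertices. -/
noncomputable def line (G : SimpleGraph V) (x y : V) : Set V :=
  if G.Adj x y then {x, y} ∪ symmDiff (G.neighborSet x) (G.neighborSet y)
  else {x, y} ∪ (G.neighborSet x ∩ G.neighborSet y)

/-- The set of all lines of a graph. -/
def lines (G : SimpleGraph V) : Set (Set V) :=
  {ℓ | ∃ x y : V, x ≠ y ∧ ℓ = line G x y}

/-- The set of non-neighbors of `x`, other than `x` itself. -/
def N2 (G : SimpleGraph V) (x : V) : Set V := {u | u ≠ x ∧ ¬ G.Adj x u}


/-- Two copies of `K_p` joined by a perfect matching. -/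
def M (p : ℕ) : SimpleGraph (Fin p ⊕ Fin p) where
  Adj u v :=
    match u, v with
    | Sum.inl i, Sum.inl j => i ≠ j
    | Sum.inr i, Sum.inr j => i ≠ j
    | Sum.inl i, Sum.inr j => i = j
    | Sum.inr i, Sum.inl j => i = j
  symm := ⟨by rintro (i | i) (j | j) h <;> exact h.symm⟩
  loopless := ⟨by rintro (i | i) h <;> exact h rfl⟩

/-- `K_{1,2,2}` minus an edge incident to the degree-four vertex `4`;
vertices `0,2` and `1,3` are the parts of size two. -/
def K122' : SimpleGraph (Fin 5) :=
  SimpleGraph.fromEdgeSet {s(0,1), s(0,3), s(2,1), s(2,3), s(2,4), s(1,4), s(3,4)}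

/-- The house graph: five-cycle `0 1 2 3 4` with the chord `{1,4}`. -/
def house : SimpleGraph (Fin 5) :=
  SimpleGraph.fromEdgeSet {s(0,1), s(1,2), s(2,3), s(3,4), s(4,0), s(1,4)}

/-- The non-neighbor ("mate") involution on `Fin q ⊕ Fin p × Fin 2`. -/
def mate (q p : ℕ) : (Fin q ⊕ Fin p × Fin 2) → (Fin q ⊕ Fin p × Fin 2)
  | Sum.inl j => Sum.inl j
  | Sum.inr (i, k) => Sum.inr (i, k + 1)

lemma mate_invol (q p : ℕ) : Function.Involutive (mate q p) := by
  rintro (j | ⟨i, k⟩)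
  · rfl
  · show Sum.inr (i, k + 1 + 1) = Sum.inr (i, k)
    have h : (1 : Fin 2) + 1 = 0 := rfl
    rw [add_assoc, h, add_zero]

/-- The complete multipartite graph with `q` parts of size one and `p` parts of size two. -/
def Kqp (q p : ℕ) : SimpleGraph (Fin q ⊕ Fin p × Fin 2) where
  Adj u v := u ≠ v ∧ v ≠ mate q p u
  symm := ⟨by
    rintro u v ⟨h1, h2⟩
    refine ⟨h1.symm, fun h => h2 ?_⟩
    rw [h]
    exact (mate_invol q p v).symm⟩
  loopless := ⟨fun u h => h.1 rfl⟩

/-- Membership in the family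
`{K_{1,2}, K_{2,2}, K_{2,3}, K_{1,2,2}, K'_{1,2,2}, K''_{1,2,2}, M_6, K'_6, M_8, K'_8}`
up to isomorphism.  Here `Kqp q p` denotes the complete multipartite graph with
`q` parts of size one and `p` parts of size two. -/
def InFamily (G : SimpleGraph V) : Prop :=
  Nonempty (G ≃g completeBipartiteGraph (Fin 1) (Fin 2)) ∨
  Nonempty (G ≃g completeBipartiteGraph (Fin 2) (Fin 2)) ∨
  Nonempty (G ≃g completeBipartiteGraph (Fin 2) (Fin 3)) ∨
  Nonempty (G ≃g Kqp 1 2) ∨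
  Nonempty (G ≃g K122') ∨
  Nonempty (G ≃g house) ∨
  Nonempty (G ≃g M 3) ∨
  Nonempty (G ≃g Kqp 0 3) ∨
  Nonempty (G ≃g M 4) ∨
  Nonempty (G ≃g Kqp 0 4)


section Aux
variable {V : Type*}

instance (p : ℕ) : DecidableRel (M p).Adj := fun u v => by
  rcases u with i | i <;> rcases v with j | j
  · exact inferInstanceAs (Decidable (i ≠ j))
  · exact inferInstanceAs (Decidable (i = j))
  · exact inferInstanceAs (Decidable (i = j))
  · exact inferInstanceAs (Decidable (i ≠ j))

instance (q p : ℕ) : DecidableRel (Kqp q p).Adj := fun u v =>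
  inferInstanceAs (Decidable (u ≠ v ∧ v ≠ mate q p u))

instance : DecidableRel K122'.Adj := fun a b =>
  decidable_of_iff (s(a,b) ∈ ({s(0,1), s(0,3), s(2,1), s(2,3), s(2,4), s(1,4), s(3,4)} : Finset (Sym2 (Fin 5))) ∧ a ≠ b)
    (by simp [K122', SimpleGraph.fromEdgeSet_adj])

instance : DecidableRel house.Adj := fun a b =>
  decidable_of_iff (s(a,b) ∈ ({s(0,1), s(1,2), s(2,3), s(3,4), s(4,0), s(1,4)} : Finset (Sym2 (Fin 5))) ∧ a ≠ b)
    (by simp [house, SimpleGraph.fromEdgeSet_adj])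

instance (α β : Type*) [DecidableEq α] [DecidableEq β] :
    DecidableRel (completeBipartiteGraph α β).Adj := fun _ _ =>
  inferInstanceAs (Decidable (_ ∨ _))

/-- Computable version of `line`. -/
def lineF (G : SimpleGraph V) [Fintype V] [DecidableEq V] [DecidableRel G.Adj] (x y : V) : Finset V :=
  if G.Adj x y then {x, y} ∪ symmDiff (G.neighborFinset x) (G.neighborFinset y)
  else {x, y} ∪ (G.neighborFinset x ∩ G.neighborFinset y)

lemma line_eq_coe (G : SimpleGraph V) [Fintype V] [DecidableEq V] [DecidableRel G.Adj] (x y : V) :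
    line G x y = ↑(lineF G x y) := by
  by_cases h : G.Adj x y <;>
    simp [line, lineF, h, SimpleGraph.neighborFinset_def, Set.coe_toFinset, Set.insert_union]

/-- Computable version of `lines`. -/
def linesF (G : SimpleGraph V) [Fintype V] [DecidableEq V] [DecidableRel G.Adj] : Finset (Finset V) :=
  ((Finset.univ ×ˢ Finset.univ).filter (fun p : V × V => p.1 ≠ p.2)).image fun p => lineF G p.1 p.2

lemma ncard_lines (G : SimpleGraph V) [Fintype V] [DecidableEq V] [DecidableRel G.Adj] :
    (lines G).ncard = (linesF G).card := by
  have : lines G = (fun t : Finset V => (↑t : Set V)) '' ↑(linesF G) := by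
    ext ℓ
    constructor
    · rintro ⟨x, y, hxy, rfl⟩
      exact ⟨lineF G x y, by simp [linesF]; exact ⟨x, y, hxy, rfl⟩, (line_eq_coe G x y).symm⟩
    · rintro ⟨t, ht, rfl⟩
      simp [linesF] at ht
      obtain ⟨x, y, hxy, rfl⟩ := ht
      exact ⟨x, y, hxy, (line_eq_coe G x y).symm⟩
  rw [this, Set.ncard_image_of_injective _ Finset.coe_injective, Set.ncard_coe_finset]

lemma line_map {W : Type*} {G : SimpleGraph V} {H : SimpleGraph W} (e : G ≃g H) (x y : V) :
    line H (e x) (e y) = (⇑e) '' line G x y := by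
  have hadj : H.Adj (e x) (e y) ↔ G.Adj x y := e.map_adj_iff
  have hmem : ∀ w : V, e w ∈ line H (e x) (e y) ↔ w ∈ line G x y := by
    intro w
    by_cases h : G.Adj x y
    · rw [line, line, if_pos h, if_pos (hadj.mpr h)]
      simp [Set.mem_symmDiff, SimpleGraph.mem_neighborSet, e.map_adj_iff, e.injective.eq_iff]
    · rw [line, line, if_neg h, if_neg (fun hc => h (hadj.mp hc))]
      simp [SimpleGraph.mem_neighborSet, e.map_adj_iff, e.injective.eq_iff]
  ext z
  obtain ⟨w, rfl⟩ := e.surjective z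
  rw [e.injective.mem_set_image]
  exact hmem w

lemma lines_map {W : Type*} {G : SimpleGraph V} {H : SimpleGraph W} (e : G ≃g H) :
    lines H = Set.image (⇑e) '' lines G := by
  ext ℓ
  constructor
  · rintro ⟨x, y, hxy, rfl⟩
    refine ⟨line G (e.symm x) (e.symm y),
      ⟨e.symm x, e.symm y, fun hc => hxy (e.symm.injective hc), rfl⟩, ?_⟩
    rw [← line_map e, e.apply_symm_apply, e.apply_symm_apply]
  · rintro ⟨ℓ', ⟨x, y, hxy, rfl⟩, rfl⟩
    exact ⟨e x, e y, fun hc => hxy (e.injective hc), (line_map e x y).symm⟩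

lemma reduce {W : Type*} [Fintype V] [Fintype W] {G : SimpleGraph V} {H : SimpleGraph W}
    (e : G ≃g H) (h : (lines H).ncard < Fintype.card W) :
    (lines G).ncard < Fintype.card V := by
  rw [Fintype.card_congr e.toEquiv]
  rwa [lines_map e, Set.ncard_image_of_injective _ (Set.image_injective.mpr e.injective)] at h

lemma reduce' {W : Type*} [Fintype V] [Fintype W] [DecidableEq W] {G : SimpleGraph V}
    {H : SimpleGraph W} [DecidableRel H.Adj] (e : G ≃g H)
    (h : (linesF H).card < Fintype.card W) :
    (lines G).ncard < Fintype.card V :=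
  reduce e (by rwa [ncard_lines])

end Aux

/-- Every diameter-two graph isomorphic to one of the ten graphs of the family
has strictly fewer lines than vertices. -/
theorem stmt18 [Fintype V] (G : SimpleGraph V) (hG : DiamTwo G)
    (hfam : InFamily G) :
    (lines G).ncard < Fintype.card V := by
  rcases hfam with ⟨e⟩|⟨e⟩|⟨e⟩|⟨e⟩|⟨e⟩|⟨e⟩|⟨e⟩|⟨e⟩|⟨e⟩|⟨e⟩ <;>
    exact reduce' e.some (by decide)

end ChenChvatal
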